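/- Let α be a probability measure on ℕ with α({i}) > 0 for every i ∈ ℕ. Then there exists a measurable map b : [0,1) → ℕ^ℕ such that: (1) the pushforward of Lebesgue measure on [0,1) under b equals the infinite product measure α^ℕ on ℕ^ℕ, and (2) b is a bijection almost surely, i.e. there exist a Borel set E ⊆ [0,1) of full Lebesgue measure and a Borel set F ⊆ ℕ^ℕ of full α^ℕ-measure such that b restricts to a bijection from E onto F. -/
import Mathlib


open MeasureTheory

attribute [local instance] MeasureTheory.Measure.Subtype.measureSpace

namespace DigitExp

variable (r : ℕ → ℝ)

noncomputable def ell (k : ℕ) : ℝ := ∑ i ∈ Finset.range k, r i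

open Classical in
noncomputable def dig (u : ℝ) : ℕ :=
  if h : ∃ k, u < ell r (k + 1) then Nat.find h else 0

noncomputable def T (u : ℝ) : ℝ := (u - ell r (dig r u)) / r (dig r u)

variable {r}
variable (hr : ∀ i, 0 < r i) (hsum : HasSum r 1)

lemma ell_zero : ell r 0 = 0 := rfl

lemma ell_succ (k : ℕ) : ell r (k + 1) = ell r k + r k := Finset.sum_range_succ r k

include hr in
lemma ell_mono : Monotone (ell r) :=
  monotone_nat_of_le_succ fun k => by rw [ell_succ]; linarith [hr k]

include hr in
lemma ell_nonneg (k : ℕ) : 0 ≤ ell r k :=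
  Finset.sum_nonneg fun i _ => (hr i).le

include hr hsum in
lemma ell_le_one (k : ℕ) : ell r k ≤ 1 :=
  sum_le_hasSum (Finset.range k) (fun i _ => (hr i).le) hsum

include hr hsum in
lemma exists_dig {u : ℝ} (hu : u < 1) : ∃ k, u < ell r (k + 1) := by
  obtain ⟨n, hn⟩ := (hsum.tendsto_sum_nat.eventually (eventually_gt_nhds hu)).exists
  exact ⟨n, lt_of_lt_of_le hn (ell_mono hr n.le_succ)⟩

include hr in
lemma dig_eq {u : ℝ} {k : ℕ} (h1 : ell r k ≤ u) (h2 : u < ell r (k + 1)) :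
    dig r u = k := by
  have hex : ∃ j, u < ell r (j + 1) := ⟨k, h2⟩
  rw [dig, dif_pos hex, Nat.find_eq_iff]
  refine ⟨h2, fun j hj => not_lt.2 ?_⟩
  exact le_trans (ell_mono hr (by omega : j + 1 ≤ k)) h1

include hr hsum in
lemma dig_spec {u : ℝ} (h0 : 0 ≤ u) (h1 : u < 1) :
    ell r (dig r u) ≤ u ∧ u < ell r (dig r u + 1) := by
  have hex := exists_dig hr hsum h1
  have hd : dig r u = Nat.find hex := dif_pos hex
  constructor
  · rw [hd]
    rcases Nat.eq_zero_or_pos (Nat.find hex) with h | h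
    · rw [h, ell_zero]; exact h0
    · obtain ⟨m, hm⟩ := Nat.exists_eq_succ_of_ne_zero h.ne'
      rw [hm]
      have := Nat.find_min hex (m := m) (by omega)
      simpa using not_lt.1 this
  · rw [hd]; exact Nat.find_spec hex

include hr hsum in
lemma T_mem {u : ℝ} (h0 : 0 ≤ u) (h1 : u < 1) : 0 ≤ T r u ∧ T r u < 1 := by
  obtain ⟨ha, hb⟩ := dig_spec hr hsum h0 h1
  rw [ell_succ] at hb
  have hrp := hr (dig r u)
  constructor
  · exact div_nonneg (by linarith) hrp.le
  · rw [T, div_lt_one hrp]; linarith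

include hr hsum in
lemma iter_mem {u : ℝ} (h0 : 0 ≤ u) (h1 : u < 1) (n : ℕ) :
    0 ≤ (T r)^[n] u ∧ (T r)^[n] u < 1 := by
  induction n with
  | zero => exact ⟨h0, h1⟩
  | succ n ih =>
    rw [Function.iterate_succ_apply']
    exact T_mem hr hsum ih.1 ih.2

include hr in
lemma measurable_dig : Measurable (dig r) := by
  apply measurable_to_countable'
  intro k
  have hpre : dig r ⁻¹' {k} =
      if k = 0 then Set.Iio (ell r 1) ∪ (⋃ j, Set.Iio (ell r (j + 1)))ᶜ
      else Set.Ico (ell r k) (ell r (k + 1)) := by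
    ext u
    by_cases hex : ∃ j, u < ell r (j + 1)
    · have hd : dig r u = Nat.find hex := dif_pos hex
      have hmem : u ∈ ⋃ j, Set.Iio (ell r (j + 1)) := by
        obtain ⟨j, hj⟩ := hex; exact Set.mem_iUnion.2 ⟨j, hj⟩
      rcases eq_or_ne k 0 with rfl | hk
      · rw [if_pos rfl]
        simp only [Set.mem_preimage, Set.mem_singleton_iff, hd,
          Set.mem_union, Set.mem_Iio, Set.mem_compl_iff, hmem, not_true, or_false]
        rw [Nat.find_eq_zero]
      · simp only [if_neg hk, Set.mem_preimage, Set.mem_singleton_iff, hd,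
          Set.mem_Ico, Nat.find_eq_iff]
        constructor
        · rintro ⟨h1, h2⟩
          refine ⟨?_, h1⟩
          obtain ⟨m, hm⟩ := Nat.exists_eq_succ_of_ne_zero hk
          have := h2 m (by omega)
          rw [hm]; exact not_lt.1 this
        · rintro ⟨h1, h2⟩
          exact ⟨h2, fun j hj => not_lt.2 (le_trans (ell_mono hr (by omega : j + 1 ≤ k)) h1)⟩
    · have hd : dig r u = 0 := dif_neg hex
      have hmem : u ∉ ⋃ j, Set.Iio (ell r (j + 1)) := by
        simpa [Set.mem_iUnion] using hex
      rcases eq_or_ne k 0 with rfl | hk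
      · rw [if_pos rfl]
        simp only [Set.mem_preimage, Set.mem_singleton_iff, hd, Set.mem_union,
          Set.mem_Iio, Set.mem_compl_iff, hmem, not_false_iff, or_true, true_iff]
      · simp only [if_neg hk, Set.mem_preimage, Set.mem_singleton_iff, hd, Set.mem_Ico]
        constructor
        · intro h; exact absurd h.symm hk
        · rintro ⟨-, h2⟩; exact absurd ⟨k, h2⟩ hex
  rw [hpre]
  split
  · exact (measurableSet_Iio.union ((MeasurableSet.iUnion fun j => measurableSet_Iio).compl))
  · exact measurableSet_Ico

include hr in
lemma measurable_T : Measurable (T r) := by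
  have h1 : Measurable fun u => ell r (dig r u) :=
    (measurable_from_nat (f := ell r)).comp (measurable_dig hr)
  have h2 : Measurable fun u => r (dig r u) :=
    (measurable_from_nat (f := r)).comp (measurable_dig hr)
  exact (measurable_id.sub h1).div h2

include hr hsum in
lemma cyl (n : ℕ) (y : ℕ → ℕ) :
    ∃ a : ℝ, 0 ≤ a ∧ a + ∏ i ∈ Finset.range n, r (y i) ≤ 1 ∧
      {u : ℝ | (0 ≤ u ∧ u < 1) ∧ ∀ i < n, dig r ((T r)^[i] u) = y i} =
        Set.Ico a (a + ∏ i ∈ Finset.range n, r (y i)) := by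
  induction n generalizing y with
  | zero =>
    refine ⟨0, le_refl 0, ?_, ?_⟩
    · simpa using (le_refl (1:ℝ))
    · ext u
      simp [Set.mem_Ico]
  | succ n ih =>
    obtain ⟨a, ha0, ha1, hset⟩ := ih (fun i => y (i + 1))
    set k := y 0 with hk
    set P : ℝ := ∏ i ∈ Finset.range n, r (y (i + 1)) with hP
    have hPpos : 0 < P := Finset.prod_pos fun i _ => hr _
    have hprod : ∏ i ∈ Finset.range (n + 1), r (y i) = P * r k := by
      rw [Finset.prod_range_succ']
    refine ⟨ell r k + r k * a, ?_, ?_, ?_⟩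
    · have := ell_nonneg hr k
      have := (hr k).le
      positivity
    · rw [hprod]
      have h1 : ell r k + r k * a + P * r k = ell r k + r k * (a + P) := by ring
      rw [h1]
      have h2 : r k * (a + P) ≤ r k * 1 := by
        exact mul_le_mul_of_nonneg_left ha1 (hr k).le
      have h3 : ell r k + r k ≤ 1 := by
        rw [← ell_succ]; exact ell_le_one hr hsum (k + 1)
      linarith
    · rw [hprod]
      ext u
      simp only [Set.mem_setOf_eq, Set.mem_Ico]
      constructor
      · rintro ⟨⟨h0, h1⟩, hdig⟩
        have hd0 : dig r u = k := hdig 0 (Nat.succ_pos n)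
        have hTu : (T r) u ∈ Set.Ico a (a + P) := by
          rw [← hset]
          refine ⟨⟨(T_mem hr hsum h0 h1).1, (T_mem hr hsum h0 h1).2⟩, fun i hi => ?_⟩
          rw [← Function.iterate_succ_apply]
          exact hdig (i + 1) (by omega)
        obtain ⟨hTa, hTb⟩ := hTu
        have hspec := dig_spec hr hsum h0 h1
        rw [hd0] at hspec
        have hTdef : T r u = (u - ell r k) / r k := by rw [T, hd0]
        rw [hTdef] at hTa hTb
        have hrk := hr k
        rw [le_div_iff₀ hrk] at hTa
        rw [div_lt_iff₀ hrk] at hTb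
        constructor
        · linarith
        · nlinarith
      · rintro ⟨hua, hub⟩
        have hrk := hr k
        have h3 : ell r k + r k ≤ 1 := by
          rw [← ell_succ]; exact ell_le_one hr hsum (k + 1)
        have hu0 : 0 ≤ u := le_trans (by nlinarith [ell_nonneg hr k, (hr k).le]) hua
        have huk : ell r k ≤ u := le_trans (by nlinarith) hua
        have huk2 : u < ell r k + r k := by nlinarith
        have hu1 : u < 1 := lt_of_lt_of_le huk2 h3
        have hd0 : dig r u = k := dig_eq hr huk (by rw [ell_succ]; exact huk2)
        have hTdef : T r u = (u - ell r k) / r k := by rw [T, hd0]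
        have hTu : T r u ∈ Set.Ico a (a + P) := by
          rw [hTdef]
          constructor
          · rw [le_div_iff₀ hrk]; linarith
          · rw [div_lt_iff₀ hrk]; nlinarith
        rw [← hset] at hTu
        obtain ⟨-, hTdig⟩ := hTu
        refine ⟨⟨hu0, hu1⟩, fun i hi => ?_⟩
        rcases Nat.eq_zero_or_pos i with rfl | hip
        · exact hd0
        · obtain ⟨m, rfl⟩ := Nat.exists_eq_succ_of_ne_zero hip.ne'
          rw [Function.iterate_succ_apply]
          exact hTdig m (by omega)

end DigitExp

open DigitExp

/-- **Digit-expansion isomorphism.** For a probability measure `α` on `ℕ` with all atoms of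
positive mass, there is a measurable map `b : [0,1) → ℕ^ℕ` whose pushforward of Lebesgue
measure on `[0,1)` is the infinite product measure `α^ℕ` (characterized here by its values on
cylinder sets), and which is a bijection between a Borel set of full Lebesgue measure in `[0,1)`
and a Borel set of full `α^ℕ`-measure in `ℕ^ℕ`. -/
theorem digit_expansion_isomorphism (α : Measure ℕ) [IsProbabilityMeasure α]
    (hpos : ∀ i : ℕ, 0 < α {i}) :
    ∃ b : Set.Ico (0 : ℝ) 1 → (ℕ → ℕ),
      Measurable b ∧
      (∀ (n : ℕ) (y : Fin n → ℕ),
        Measure.map b (volume : Measure (Set.Ico (0 : ℝ) 1))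
            {x : ℕ → ℕ | ∀ i : Fin n, x i = y i} = ∏ i, α {y i}) ∧
      ∃ (E : Set (Set.Ico (0 : ℝ) 1)) (F : Set (ℕ → ℕ)),
        MeasurableSet E ∧ MeasurableSet F ∧
        (volume : Measure (Set.Ico (0 : ℝ) 1)) E = 1 ∧
        Measure.map b (volume : Measure (Set.Ico (0 : ℝ) 1)) F = 1 ∧
        Set.BijOn b E F := by
    classical
  set r : ℕ → ℝ := fun i => (α {i}).toReal with hrdef
  have hfin : ∀ i : ℕ, α {i} ≠ ⊤ := fun i => measure_ne_top α {i}
  have hr : ∀ i, 0 < r i := fun i => ENNReal.toReal_pos (hpos i).ne' (hfin i)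
  have htsum : ∑' i : ℕ, α {i} = 1 := by
    have h1 : (Set.univ : Set ℕ) = ⋃ i : ℕ, {i} := by
      ext x; simp
    have h2 : α (⋃ i : ℕ, {i}) = ∑' i : ℕ, α {i} :=
      measure_iUnion (fun i j hij => by
        simp [Function.onFun, Set.disjoint_singleton, hij])
        (fun i => measurableSet_singleton i)
    rw [← measure_univ (μ := α), h1, h2]
  have hsum : HasSum r 1 := by
    have h := ENNReal.hasSum_toReal (f := fun i : ℕ => α {i}) (by rw [htsum]; exact ENNReal.one_ne_top)
    have h2 : (∑' x : ℕ, (α {x}).toReal) = 1 := by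
      rw [← ENNReal.tsum_toReal_eq hfin, htsum, ENNReal.toReal_one]
    rwa [h2] at h
  set b : Set.Ico (0 : ℝ) 1 → ℕ → ℕ :=
    fun u n => dig r ((T r)^[n] u.val) with hbdef
  have hb : Measurable b := by
    apply measurable_pi_lambda
    intro n
    exact (measurable_dig hr).comp (((measurable_T hr).iterate n).comp measurable_subtype_coe)
  have hIco : MeasurableSet (Set.Ico (0:ℝ) 1) := measurableSet_Ico
  -- the preimage computation
  have hpre : ∀ (n : ℕ) (Y : ℕ → ℕ),
      (Subtype.val '' {u : Set.Ico (0:ℝ) 1 | ∀ i < n, b u i = Y i}) =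
        {u : ℝ | (0 ≤ u ∧ u < 1) ∧ ∀ i < n, dig r ((T r)^[i] u) = Y i} := by
    intro n Y
    ext u
    constructor
    · rintro ⟨⟨v, hv⟩, hpred, rfl⟩
      exact ⟨Set.mem_Ico.1 hv, hpred⟩
    · rintro ⟨hu, hpred⟩
      exact ⟨⟨u, Set.mem_Ico.2 hu⟩, hpred, rfl⟩
  refine ⟨b, hb, ?_, ?_⟩
  · -- cylinder measures
    intro n y
    set Y : ℕ → ℕ := fun i => if h : i < n then y ⟨i, h⟩ else 0 with hYdef
    have hS : MeasurableSet {x : ℕ → ℕ | ∀ i : Fin n, x i = y i} := by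
      have : {x : ℕ → ℕ | ∀ i : Fin n, x i = y i} =
          ⋂ i : Fin n, (fun x : ℕ → ℕ => x i.val) ⁻¹' {y i} := by
        ext x; simp [Set.mem_iInter]
      rw [this]
      exact MeasurableSet.iInter fun i => (measurable_pi_apply i.val) (measurableSet_singleton _)
    rw [Measure.map_apply hb hS]
    have hpreq : b ⁻¹' {x : ℕ → ℕ | ∀ i : Fin n, x i = y i} =
        {u : Set.Ico (0:ℝ) 1 | ∀ i < n, b u i = Y i} := by
      ext u
      simp only [Set.mem_preimage, Set.mem_setOf_eq]
      constructor
      · intro h i hi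
        rw [hYdef]; simp only [dif_pos hi]; exact h ⟨i, hi⟩
      · intro h i
        have := h i.val i.isLt
        simpa [hYdef, i.isLt] using this
    rw [hpreq, Measure.Subtype.volume_def,
      MeasurableEmbedding.comap_apply (MeasurableEmbedding.subtype_coe hIco), hpre n Y]
    obtain ⟨a, ha0, ha1, hset⟩ := cyl hr hsum n Y
    rw [hset, Real.volume_Ico, add_sub_cancel_left]
    rw [show (∏ i : Fin n, α {y i}) = ∏ i ∈ Finset.range n, α {Y i} by
      rw [← Fin.prod_univ_eq_prod_range (fun i => α {Y i}) n]
      exact Finset.prod_congr rfl fun i _ => by rw [hYdef]; simp [i.isLt]]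
    rw [ENNReal.ofReal_prod_of_nonneg fun i _ => (hr (Y i)).le]
    exact Finset.prod_congr rfl fun i _ => ENNReal.ofReal_toReal (hfin (Y i))
  · -- bijection
    have hpair : ∀ j k : ℕ, j ≠ k → r j + r k ≤ 1 := by
      intro j k hjk
      have hdisj : Disjoint ({j} : Set ℕ) {k} := by
        simp [Set.disjoint_singleton, hjk]
      have h1 : α {j} + α {k} ≤ 1 := by
        rw [← measure_union hdisj (measurableSet_singleton k)]
        exact prob_le_one
      have h2 := ENNReal.toReal_mono ENNReal.one_ne_top h1
      rwa [ENNReal.toReal_add (hfin j) (hfin k), ENNReal.toReal_one] at h2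
    set m : ℝ := max (1 - r 0) (1 - r 1) with hmdef
    have hmk : ∀ k, r k ≤ m := by
      intro k
      rcases eq_or_ne k 0 with rfl | hk
      · exact le_trans (by linarith [hpair 0 1 (by omega)]) (le_max_right _ _)
      · exact le_trans (by linarith [hpair 0 k (Ne.symm hk)]) (le_max_left _ _)
    have hm0 : 0 ≤ m := le_trans (hr 0).le (hmk 0)
    have hm1 : m < 1 := max_lt (by linarith [hr 0]) (by linarith [hr 1])
    have hinj : Function.Injective b := by
      intro u v huv
      have hbound : ∀ n : ℕ, |u.val - v.val| ≤ m ^ n := by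
        intro n
        obtain ⟨a, ha0, ha1, hset⟩ := cyl hr hsum n (b u)
        have humem : u.val ∈ {w : ℝ | (0 ≤ w ∧ w < 1) ∧ ∀ i < n, dig r ((T r)^[i] w) = b u i} :=
          ⟨Set.mem_Ico.1 u.property, fun i _ => rfl⟩
        have hvmem : v.val ∈ {w : ℝ | (0 ≤ w ∧ w < 1) ∧ ∀ i < n, dig r ((T r)^[i] w) = b u i} :=
          ⟨Set.mem_Ico.1 v.property, fun i _ => by rw [huv]⟩
        rw [hset] at humem hvmem
        obtain ⟨hu1, hu2⟩ := humem
        obtain ⟨hv1, hv2⟩ := hvmem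
        have hP : ∏ i ∈ Finset.range n, r (b u i) ≤ m ^ n := by
          calc ∏ i ∈ Finset.range n, r (b u i) ≤ ∏ _i ∈ Finset.range n, m :=
                Finset.prod_le_prod (fun i _ => (hr _).le) (fun i _ => hmk _)
            _ = m ^ n := by rw [Finset.prod_const, Finset.card_range]
        have habs : |u.val - v.val| < ∏ i ∈ Finset.range n, r (b u i) := by
          rw [abs_sub_lt_iff]; constructor <;> linarith
        linarith
      have hz : |u.val - v.val| ≤ 0 :=
        ge_of_tendsto (tendsto_pow_atTop_nhds_zero_of_lt_one hm0 hm1)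
          (Filter.Eventually.of_forall hbound)
      have : u.val = v.val := by
        have := abs_nonneg (u.val - v.val)
        have h0 : |u.val - v.val| = 0 := le_antisymm hz this
        rw [abs_eq_zero, sub_eq_zero] at h0
        exact h0
      exact Subtype.ext this
    haveI : StandardBorelSpace (Set.Ico (0:ℝ) 1) := hIco.standardBorel
    have hemb : MeasurableEmbedding b := hb.measurableEmbedding hinj
    refine ⟨Set.univ, Set.range b, MeasurableSet.univ, hemb.measurableSet_range, ?_, ?_, ?_⟩
    · rw [Measure.Subtype.volume_univ hIco.nullMeasurableSet, Real.volume_Ico]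
      norm_num
    · rw [Measure.map_apply hb hemb.measurableSet_range, Set.preimage_range,
        Measure.Subtype.volume_univ hIco.nullMeasurableSet, Real.volume_Ico]
      norm_num
    · refine ⟨fun x _ => Set.mem_range_self x, hinj.injOn, fun x hx => ?_⟩
      obtain ⟨u, rfl⟩ := hx
      exact ⟨u, trivial, rfl⟩
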